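/- Let R: L_{2e} → L_{2e} be causal and period preserving with Γ(R) < ∞. Then the RMS gain over T-periodic inputs is bounded by the incremental L_2 gain: sup over T-periodic u₁ ≠ u₂ of ‖ỹ₁ − ỹ₂‖_RMS / ‖u₁ − u₂‖_RMS ≤ Γ(R), where ỹ_i are the T-periodic asymptotic limits of Ru_i. -/

import Mathlib

open MeasureTheory

/-- Truncation operator `P_T` on signals over `[0,∞)`. -/
noncomputable def trunc (T : ℝ) (u : ℝ → ℝ) : ℝ → ℝ := fun t => if t ≤ T then u t else 0

/-- The measure of the time axis `[0,∞)`. -/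
noncomputable def timeMeasure : MeasureTheory.Measure ℝ := volume.restrict (Set.Ici 0)

/-- RMS norm of a `T`-periodic signal: `‖v‖_RMS = (1/√T)·‖v‖_{L₂[0,T]}`. -/
noncomputable def rmsNorm (T : ℝ) (v : ℝ → ℝ) : ℝ :=
  (eLpNorm v 2 (volume.restrict (Set.Ioc 0 T))).toReal / Real.sqrt T

section Aux

open Set ENNReal

lemma lint_shift_Ioc (g : ℝ → ℝ≥0∞) (a b c : ℝ) :
    ∫⁻ t in Set.Ioc a b, g t = ∫⁻ t in Set.Ioc (a - c) (b - c), g (t + c) := by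
  have hpre : ((· + c) ⁻¹' Set.Ioc a b) = Set.Ioc (a - c) (b - c) := by
    ext t
    simp only [Set.mem_preimage, Set.mem_Ioc]
    constructor <;> intro h <;> exact ⟨by linarith [h.1], by linarith [h.2]⟩
  calc ∫⁻ t in Set.Ioc a b, g t
      = ∫⁻ t, g t ∂((Measure.map (· + c) volume).restrict (Set.Ioc a b)) := by
        rw [map_add_right_eq_self]
    _ = ∫⁻ t, g t ∂(Measure.map (· + c) (volume.restrict ((· + c) ⁻¹' Set.Ioc a b))) := by
        rw [Measure.restrict_map (measurable_add_const c) measurableSet_Ioc]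
    _ = ∫⁻ t, g t ∂(Measure.map (MeasurableEquiv.addRight c)
          (volume.restrict ((· + c) ⁻¹' Set.Ioc a b))) := by
        rw [MeasurableEquiv.coe_addRight]
    _ = ∫⁻ t in ((· + c) ⁻¹' Set.Ioc a b), g (t + c) := by
        rw [lintegral_map_equiv]
        rfl
    _ = _ := by rw [hpre]

lemma per_iter {α : Type*} {v : ℝ → α} {T : ℝ} (hT : 0 < T)
    (h : ∀ t, 0 ≤ t → v (t + T) = v t) :
    ∀ (j : ℕ) (t : ℝ), 0 ≤ t → v (t + j * T) = v t := by
  intro j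
  induction j with
  | zero => simp
  | succ j ih =>
    intro t ht
    have hjT : (0:ℝ) ≤ (j:ℝ) * T := by positivity
    have : t + ((j:ℕ)+1 : ℕ) * T = (t + (j:ℝ)*T) + T := by push_cast; ring
    rw [this, h _ (by linarith), ih t ht]

lemma per_lint_interval {g : ℝ → ℝ≥0∞} {T : ℝ} (hT : 0 < T)
    (hper : ∀ t, 0 ≤ t → g (t + T) = g t) (j : ℕ) :
    ∫⁻ t in Set.Ioc ((j:ℝ) * T) (((j:ℝ)+1) * T), g t = ∫⁻ t in Set.Ioc 0 T, g t := by
  rw [lint_shift_Ioc g _ _ ((j:ℝ)*T)]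
  have h1 : (j:ℝ)*T - (j:ℝ)*T = 0 := by ring
  have h2 : ((j:ℝ)+1)*T - (j:ℝ)*T = T := by ring
  rw [h1, h2]
  apply lintegral_congr_ae
  filter_upwards [ae_restrict_mem measurableSet_Ioc] with t ht
  exact per_iter hT hper j t ht.1.le

lemma per_lint_sum {g : ℝ → ℝ≥0∞} {T : ℝ} (hT : 0 < T)
    (hper : ∀ t, 0 ≤ t → g (t + T) = g t) (n : ℕ) :
    ∫⁻ t in Set.Ioc 0 ((n:ℝ) * T), g t = n * ∫⁻ t in Set.Ioc 0 T, g t := by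
  induction n with
  | zero => simp
  | succ n ih =>
    have hsplit : Set.Ioc (0:ℝ) (((n:ℕ)+1 : ℕ) * T)
        = Set.Ioc 0 ((n:ℝ)*T) ∪ Set.Ioc ((n:ℝ)*T) (((n:ℝ)+1)*T) := by
      rw [Set.Ioc_union_Ioc_eq_Ioc (by positivity) (by nlinarith)]
      push_cast; ring_nf
    rw [hsplit, lintegral_union measurableSet_Ioc (Set.Ioc_disjoint_Ioc_of_le le_rfl), ih,
      per_lint_interval hT hper n]
    push_cast; ring

lemma lower_sum {F : ℝ → ℝ≥0∞} {T : ℝ} {S : ℝ≥0∞} {k : ℕ}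
    (h : ∀ j : ℕ, k ≤ j → S ≤ ∫⁻ t in Set.Ioc ((j:ℝ)*T) (((j:ℝ)+1)*T), F t)
    (hT : 0 < T) :
    ∀ m : ℕ, (m : ℝ≥0∞) * S ≤ ∫⁻ t in Set.Ioc ((k:ℝ)*T) (((k+m : ℕ):ℝ)*T), F t := by
  intro m
  induction m with
  | zero => simp
  | succ m ih =>
    have hsplit : Set.Ioc ((k:ℝ)*T) (((k+(m+1) : ℕ):ℝ)*T)
        = Set.Ioc ((k:ℝ)*T) (((k+m : ℕ):ℝ)*T)
          ∪ Set.Ioc ((((k+m:ℕ)):ℝ)*T) (((((k+m:ℕ)):ℝ)+1)*T) := by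
      rw [Set.Ioc_union_Ioc_eq_Ioc (by push_cast; nlinarith) (by push_cast; nlinarith)]
      push_cast; ring_nf
    rw [hsplit, lintegral_union measurableSet_Ioc (Set.Ioc_disjoint_Ioc_of_le le_rfl)]
    push_cast
    calc ((m:ℝ≥0∞)+1) * S = (m:ℝ≥0∞)*S + S := by ring
      _ ≤ _ + _ := add_le_add (by exact_mod_cast ih) (by exact_mod_cast h (k+m) (by omega))

lemma ennnorm_sq_eq (x : ℝ) : ((‖x‖₊ : ℝ≥0∞))^2 = ENNReal.ofReal (x^2) := by
  rw [← enorm_eq_nnnorm, Real.enorm_eq_ofReal_abs, ← ENNReal.ofReal_pow (abs_nonneg x), sq_abs]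

lemma eLpNorm_two_eq (f : ℝ → ℝ) (μ : Measure ℝ) :
    eLpNorm f 2 μ = (∫⁻ t, ((‖f t‖₊ : ℝ≥0∞))^2 ∂μ) ^ (1/2 : ℝ) := by
  rw [eLpNorm_eq_lintegral_rpow_enorm_toReal (by norm_num) (by norm_num)]; simp only [enorm_eq_nnnorm]
  have h2 : (2:ℝ≥0∞).toReal = 2 := by simp
  rw [h2]
  congr 1
  refine lintegral_congr fun t => ?_
  rw [← ENNReal.rpow_natCast]
  norm_num

lemma lint_sq_eq (f : ℝ → ℝ) (μ : Measure ℝ) :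
    ∫⁻ t, ((‖f t‖₊ : ℝ≥0∞))^2 ∂μ = (eLpNorm f 2 μ)^2 := by
  rw [eLpNorm_two_eq, ← ENNReal.rpow_natCast _ 2, ← ENNReal.rpow_mul]
  norm_num

end Aux

open Set ENNReal in
/-- **Lemma 1 (gain bound form)**: for a causal, period-preserving operator `R` with
finite incremental gain `Γ(R)`, the RMS gain over `T`-periodic inputs is bounded by
`Γ(R)`: for all `T`-periodic `u₁, u₂` with asymptotic `T`-periodic outputs `ỹ₁, ỹ₂`,
`‖ỹ₁ − ỹ₂‖_RMS ≤ Γ(R)·‖u₁ − u₂‖_RMS`. -/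
theorem rms_gain_le_incremental_gain
    (R : (ℝ → ℝ) → (ℝ → ℝ)) (Γ : ℝ) (T : ℝ) (hT : 0 < T) (hΓ0 : 0 ≤ Γ)
    (hcausal : ∀ (t : ℝ) (u : ℝ → ℝ), trunc t (R u) = trunc t (R (trunc t u)))
    (hΓ : ∀ u₁ u₂ : ℝ → ℝ, MemLp u₁ 2 timeMeasure → MemLp u₂ 2 timeMeasure →
      eLpNorm (R u₁ - R u₂) 2 timeMeasure
        ≤ ENNReal.ofReal Γ * eLpNorm (u₁ - u₂) 2 timeMeasure)
    (u₁ u₂ ytilde₁ ytilde₂ : ℝ → ℝ)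
    (hu₁per : ∀ t, 0 ≤ t → u₁ (t + T) = u₁ t)
    (hu₂per : ∀ t, 0 ≤ t → u₂ (t + T) = u₂ t)
    (hy₁per : ∀ t, 0 ≤ t → ytilde₁ (t + T) = ytilde₁ t)
    (hy₂per : ∀ t, 0 ≤ t → ytilde₂ (t + T) = ytilde₂ t)
    (hmem₁ : ∀ t : ℝ, MemLp (trunc t u₁) 2 timeMeasure)
    (hmem₂ : ∀ t : ℝ, MemLp (trunc t u₂) 2 timeMeasure)
    (hconv₁ : ∀ ε > (0:ℝ), ∃ t₀ : ℝ, ∀ τ ≥ t₀, |R u₁ τ - ytilde₁ τ| < ε)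
    (hconv₂ : ∀ ε > (0:ℝ), ∃ t₀ : ℝ, ∀ τ ≥ t₀, |R u₂ τ - ytilde₂ τ| < ε) :
    rmsNorm T (ytilde₁ - ytilde₂) ≤ Γ * rmsNorm T (u₁ - u₂) := by
  classical
  set G := ENNReal.ofReal Γ with hGdef
  obtain ⟨φ, hφm, hφle, hφeq0⟩ :=
    exists_measurable_le_lintegral_eq (volume.restrict (Set.Ioc 0 T))
      (fun t => ((‖(ytilde₁ - ytilde₂) t‖₊ : ℝ≥0∞))^2)
  set A := ∫⁻ t in Set.Ioc 0 T, ((‖(ytilde₁ - ytilde₂) t‖₊ : ℝ≥0∞))^2 with hAdef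
  set B := ∫⁻ t in Set.Ioc 0 T, ((‖(u₁ - u₂) t‖₊ : ℝ≥0∞))^2 with hBdef
  have hφeq : A = ∫⁻ s in Set.Ioc 0 T, φ s := hφeq0
  have hsub : ∀ s : Set ℝ, MeasurableSet s → s ⊆ Set.Ici (0:ℝ) →
      volume.restrict s ≤ timeMeasure := by
    intro s hs hss
    have h1 : timeMeasure.restrict s = volume.restrict s := by
      show (volume.restrict (Set.Ici 0)).restrict s = _
      rw [Measure.restrict_restrict hs, Set.inter_eq_left.mpr hss]
    calc volume.restrict s = timeMeasure.restrict s := h1.symm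
      _ ≤ timeMeasure := Measure.restrict_le_self
  have hBfin : B ≠ ∞ := by
    have hmem : MemLp (trunc T u₁ - trunc T u₂) 2 timeMeasure := (hmem₁ T).sub (hmem₂ T)
    have h1 : B = ∫⁻ t in Set.Ioc 0 T, ((‖(trunc T u₁ - trunc T u₂) t‖₊ : ℝ≥0∞))^2 := by
      rw [hBdef]
      apply lintegral_congr_ae
      filter_upwards [ae_restrict_mem measurableSet_Ioc] with t ht
      simp [trunc, Pi.sub_apply, if_pos ht.2]
    have hle : B ≤ ∫⁻ t, ((‖(trunc T u₁ - trunc T u₂) t‖₊ : ℝ≥0∞))^2 ∂timeMeasure := by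
      rw [h1]
      exact lintegral_mono' (hsub _ measurableSet_Ioc (fun x hx => hx.1.le)) le_rfl
    rw [lint_sq_eq] at hle
    exact ne_top_of_le_ne_top (ENNReal.pow_ne_top hmem.2.ne) hle
  have hEuper : ∀ t, 0 ≤ t →
      (fun t => ((‖(u₁ - u₂) t‖₊ : ℝ≥0∞))^2) (t + T)
        = (fun t => ((‖(u₁ - u₂) t‖₊ : ℝ≥0∞))^2) t := by
    intro t ht
    simp only [Pi.sub_apply, hu₁per t ht, hu₂per t ht]
  -- MAIN per-ε estimate
  have keyE : ∀ ε : ℝ, 0 < ε →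
      A ≤ ENNReal.ofReal ((1+ε)^2) * (G^2 * B)
          + ENNReal.ofReal (4*ε^2+4*ε) * ENNReal.ofReal T := by
    intro ε hε
    obtain ⟨t₁, ht₁⟩ := hconv₁ ε hε
    obtain ⟨t₂, ht₂⟩ := hconv₂ ε hε
    set C := ENNReal.ofReal (4*ε^2+4*ε) with hCdef
    set D := ENNReal.ofReal (1+ε) with hDdef
    have hD0 : D ≠ 0 := by
      rw [hDdef]
      simp only [ne_eq, ENNReal.ofReal_eq_zero, not_le]
      linarith
    have hDt : D ≠ ∞ := ENNReal.ofReal_ne_top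
    set ψ : ℝ → ℝ≥0∞ := fun s => D⁻¹ * (φ s - C) with hψdef
    set S := ∫⁻ s in Set.Ioc 0 T, ψ s with hSdef
    set k : ℕ := ⌈(max t₁ t₂) / T⌉₊ with hkdef
    have hkT : max t₁ t₂ ≤ (k:ℝ) * T := by
      have h1 := Nat.le_ceil ((max t₁ t₂)/T)
      calc max t₁ t₂ = ((max t₁ t₂)/T) * T := (div_mul_cancel₀ _ hT.ne').symm
        _ ≤ (k:ℝ)*T := mul_le_mul_of_nonneg_right h1 hT.le
    set m : ℕ := ⌈(k:ℝ)/ε⌉₊ + 1 with hmdef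
    have hkm : (k:ℝ) ≤ ε * m := by
      have h1 : (k:ℝ)/ε ≤ (m:ℝ) := by
        refine le_trans (Nat.le_ceil _) ?_
        rw [hmdef]; push_cast; linarith
      calc (k:ℝ) = ((k:ℝ)/ε)*ε := (div_mul_cancel₀ _ hε.ne').symm
        _ ≤ (m:ℝ)*ε := mul_le_mul_of_nonneg_right h1 hε.le
        _ = ε * m := mul_comm _ _
    -- pointwise estimate
    have hpt : ∀ j : ℕ, k ≤ j → ∀ τ ∈ Set.Ioc ((j:ℝ)*T) (((j:ℝ)+1)*T),
        ψ (τ - (j:ℝ)*T) ≤ ((‖R u₁ τ - R u₂ τ‖₊ : ℝ≥0∞))^2 := by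
      intro j hj τ hτ
      have hjk : (k:ℝ)*T ≤ (j:ℝ)*T := by
        have hkj : (k:ℝ) ≤ (j:ℝ) := by exact_mod_cast hj
        nlinarith
      have hτ1 : t₁ ≤ τ := le_trans (le_trans (le_max_left _ _) hkT) (le_trans hjk hτ.1.le)
      have hτ2 : t₂ ≤ τ := le_trans (le_trans (le_max_right _ _) hkT) (le_trans hjk hτ.1.le)
      have h1 := ht₁ τ hτ1
      have h2 := ht₂ τ hτ2
      set s := τ - (j:ℝ)*T with hsdef
      have hjT0 : (0:ℝ) ≤ (j:ℝ)*T := by positivity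
      have hs : s ∈ Set.Ioc (0:ℝ) T := by
        constructor
        · rw [hsdef]; linarith [hτ.1]
        · rw [hsdef]; linarith [hτ.2]
      have hy1 : ytilde₁ τ = ytilde₁ s := by
        have h := per_iter hT hy₁per j s hs.1.le
        rw [show s + (j:ℝ)*T = τ from by rw [hsdef]; ring] at h
        exact h
      have hy2 : ytilde₂ τ = ytilde₂ s := by
        have h := per_iter hT hy₂per j s hs.1.le
        rw [show s + (j:ℝ)*T = τ from by rw [hsdef]; ring] at h
        exact h
      have hreal : ((ytilde₁ - ytilde₂) s)^2 ≤ (1+ε) * (R u₁ τ - R u₂ τ)^2 + (4*ε^2+4*ε) := by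
        have he1 : |(ytilde₁ - ytilde₂) s| ≤ |R u₁ τ - R u₂ τ| + 2*ε := by
          simp only [Pi.sub_apply]
          rw [← hy1, ← hy2]
          calc |ytilde₁ τ - ytilde₂ τ|
              = |(R u₁ τ - R u₂ τ) - (R u₁ τ - ytilde₁ τ) + (R u₂ τ - ytilde₂ τ)| := by
                ring_nf
            _ ≤ |(R u₁ τ - R u₂ τ) - (R u₁ τ - ytilde₁ τ)| + |R u₂ τ - ytilde₂ τ| :=
                abs_add_le _ _
            _ ≤ |R u₁ τ - R u₂ τ| + |R u₁ τ - ytilde₁ τ| + |R u₂ τ - ytilde₂ τ| := by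
                have h3 := abs_sub (R u₁ τ - R u₂ τ) (R u₁ τ - ytilde₁ τ)
                linarith
            _ ≤ |R u₁ τ - R u₂ τ| + 2*ε := by linarith
        nlinarith [mul_self_le_mul_self (abs_nonneg ((ytilde₁ - ytilde₂) s)) he1,
          sq_abs ((ytilde₁ - ytilde₂) s), sq_abs (R u₁ τ - R u₂ τ),
          mul_nonneg hε.le (sq_nonneg (|R u₁ τ - R u₂ τ| - 2))]
      have hE : φ s ≤ D * ((‖R u₁ τ - R u₂ τ‖₊ : ℝ≥0∞))^2 + C := by
        calc φ s ≤ ((‖(ytilde₁ - ytilde₂) s‖₊ : ℝ≥0∞))^2 := hφle s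
          _ = ENNReal.ofReal (((ytilde₁ - ytilde₂) s)^2) := ennnorm_sq_eq _
          _ ≤ ENNReal.ofReal ((1+ε) * (R u₁ τ - R u₂ τ)^2 + (4*ε^2+4*ε)) :=
              ENNReal.ofReal_le_ofReal hreal
          _ ≤ ENNReal.ofReal ((1+ε) * (R u₁ τ - R u₂ τ)^2) + C := by
              rw [hCdef]; exact ENNReal.ofReal_add_le
          _ = D * ENNReal.ofReal ((R u₁ τ - R u₂ τ)^2) + C := by
              rw [hDdef, ENNReal.ofReal_mul (by linarith)]
          _ = D * ((‖R u₁ τ - R u₂ τ‖₊ : ℝ≥0∞))^2 + C := by rw [ennnorm_sq_eq]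
      show D⁻¹ * (φ s - C) ≤ _
      have h3 : φ s - C ≤ D * ((‖R u₁ τ - R u₂ τ‖₊ : ℝ≥0∞))^2 := tsub_le_iff_right.mpr hE
      calc D⁻¹ * (φ s - C) ≤ D⁻¹ * (D * ((‖R u₁ τ - R u₂ τ‖₊ : ℝ≥0∞))^2) := by gcongr
        _ = (D⁻¹ * D) * ((‖R u₁ τ - R u₂ τ‖₊ : ℝ≥0∞))^2 := by rw [mul_assoc]
        _ = _ := by rw [ENNReal.inv_mul_cancel hD0 hDt, one_mul]
    -- interval bound
    have hint : ∀ j : ℕ, k ≤ j →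
        S ≤ ∫⁻ τ in Set.Ioc ((j:ℝ)*T) (((j:ℝ)+1)*T), ((‖R u₁ τ - R u₂ τ‖₊ : ℝ≥0∞))^2 := by
      intro j hj
      have heq : ∫⁻ τ in Set.Ioc ((j:ℝ)*T) (((j:ℝ)+1)*T), ψ (τ - (j:ℝ)*T) = S := by
        rw [lint_shift_Ioc (fun τ => ψ (τ - (j:ℝ)*T)) _ _ ((j:ℝ)*T)]
        have hb1 : (j:ℝ)*T - (j:ℝ)*T = 0 := by ring
        have hb2 : ((j:ℝ)+1)*T - (j:ℝ)*T = T := by ring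
        rw [hb1, hb2, hSdef]
        exact lintegral_congr fun t => congrArg ψ (by ring)
      rw [← heq]
      refine lintegral_mono_ae ?_
      filter_upwards [ae_restrict_mem measurableSet_Ioc] with τ hτ
      exact hpt j hj τ hτ
    have hsum : (m:ℝ≥0∞) * S
        ≤ ∫⁻ τ in Set.Ioc ((k:ℝ)*T) (((k+m : ℕ):ℝ)*T), ((‖R u₁ τ - R u₂ τ‖₊ : ℝ≥0∞))^2 :=
      lower_sum hint hT m
    set nT : ℝ := ((k+m : ℕ):ℝ)*T with hnTdef
    have hnT0 : (0:ℝ) ≤ nT := by rw [hnTdef]; positivity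
    -- causality + gain bound
    have hgain : ∫⁻ τ in Set.Ioc ((k:ℝ)*T) nT, ((‖R u₁ τ - R u₂ τ‖₊ : ℝ≥0∞))^2
        ≤ G^2 * (((k+m:ℕ) : ℝ≥0∞) * B) := by
      have h1 : ∫⁻ τ in Set.Ioc ((k:ℝ)*T) nT, ((‖R u₁ τ - R u₂ τ‖₊ : ℝ≥0∞))^2
          = ∫⁻ τ in Set.Ioc ((k:ℝ)*T) nT,
              ((‖(R (trunc nT u₁) - R (trunc nT u₂)) τ‖₊ : ℝ≥0∞))^2 := by
        apply lintegral_congr_ae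
        filter_upwards [ae_restrict_mem measurableSet_Ioc] with τ hτ
        have e1 := congrFun (hcausal nT u₁) τ
        have e2 := congrFun (hcausal nT u₂) τ
        simp only [trunc, if_pos hτ.2] at e1 e2
        simp only [Pi.sub_apply, ← e1, ← e2]
      have h2 : ∫⁻ τ in Set.Ioc ((k:ℝ)*T) nT,
            ((‖(R (trunc nT u₁) - R (trunc nT u₂)) τ‖₊ : ℝ≥0∞))^2
          ≤ ∫⁻ τ, ((‖(R (trunc nT u₁) - R (trunc nT u₂)) τ‖₊ : ℝ≥0∞))^2 ∂timeMeasure := by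
        refine lintegral_mono' (hsub _ measurableSet_Ioc (fun x hx => ?_)) le_rfl
        have : (0:ℝ) ≤ (k:ℝ)*T := by positivity
        exact le_trans this hx.1.le
      have h3 : eLpNorm (R (trunc nT u₁) - R (trunc nT u₂)) 2 timeMeasure
          ≤ G * eLpNorm (trunc nT u₁ - trunc nT u₂) 2 timeMeasure :=
        hΓ _ _ (hmem₁ nT) (hmem₂ nT)
      have h4 : ∫⁻ τ, ((‖(R (trunc nT u₁) - R (trunc nT u₂)) τ‖₊ : ℝ≥0∞))^2 ∂timeMeasure
          ≤ G^2 * ∫⁻ τ, ((‖(trunc nT u₁ - trunc nT u₂) τ‖₊ : ℝ≥0∞))^2 ∂timeMeasure := by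
        rw [lint_sq_eq, lint_sq_eq, ← mul_pow]
        gcongr
      have h5 : ∫⁻ τ, ((‖(trunc nT u₁ - trunc nT u₂) τ‖₊ : ℝ≥0∞))^2 ∂timeMeasure
          = ((k+m:ℕ) : ℝ≥0∞) * B := by
        have hIoi : timeMeasure = volume.restrict (Set.Ioi 0) := by
          show volume.restrict (Set.Ici 0) = _
          exact (Measure.restrict_congr_set Ioi_ae_eq_Ici).symm
        rw [hIoi,
          show Set.Ioi (0:ℝ) = Set.Ioc 0 nT ∪ Set.Ioi nT from
            (Set.Ioc_union_Ioi_eq_Ioi hnT0).symm,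
          lintegral_union measurableSet_Ioi Set.Ioc_disjoint_Ioi_same]
        have hz : ∫⁻ τ in Set.Ioi nT, ((‖(trunc nT u₁ - trunc nT u₂) τ‖₊ : ℝ≥0∞))^2 = 0 := by
          have hz1 : ∫⁻ τ in Set.Ioi nT, ((‖(trunc nT u₁ - trunc nT u₂) τ‖₊ : ℝ≥0∞))^2
              = ∫⁻ _ in Set.Ioi nT, (0:ℝ≥0∞) := by
            apply lintegral_congr_ae
            filter_upwards [ae_restrict_mem measurableSet_Ioi] with τ hτ
            simp [trunc, Pi.sub_apply, if_neg (not_le.mpr (Set.mem_Ioi.mp hτ))]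
          rw [hz1, lintegral_zero]
        have heq2 : ∫⁻ τ in Set.Ioc 0 nT, ((‖(trunc nT u₁ - trunc nT u₂) τ‖₊ : ℝ≥0∞))^2
            = ∫⁻ τ in Set.Ioc 0 nT, ((‖(u₁ - u₂) τ‖₊ : ℝ≥0∞))^2 := by
          apply lintegral_congr_ae
          filter_upwards [ae_restrict_mem measurableSet_Ioc] with τ hτ
          simp [trunc, Pi.sub_apply, if_pos hτ.2]
        rw [hz, add_zero, heq2, hnTdef, per_lint_sum hT hEuper (k+m), hBdef]
      calc ∫⁻ τ in Set.Ioc ((k:ℝ)*T) nT, ((‖R u₁ τ - R u₂ τ‖₊ : ℝ≥0∞))^2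
          = _ := h1
        _ ≤ _ := h2
        _ ≤ G^2 * ∫⁻ τ, ((‖(trunc nT u₁ - trunc nT u₂) τ‖₊ : ℝ≥0∞))^2 ∂timeMeasure := h4
        _ = G^2 * (((k+m:ℕ) : ℝ≥0∞) * B) := by rw [h5]
    have hmS : (m:ℝ≥0∞) * S ≤ G^2 * (((k+m:ℕ):ℝ≥0∞) * B) := le_trans hsum hgain
    have hcast : (((k+m:ℕ)) : ℝ≥0∞) ≤ D * (m:ℝ≥0∞) := by
      have hr : ((k+m:ℕ) : ℝ) ≤ (1+ε) * (m:ℝ) := by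
        rw [Nat.cast_add]
        nlinarith [hkm]
      calc (((k+m:ℕ)) : ℝ≥0∞) = ENNReal.ofReal ((k+m:ℕ) : ℝ) := (ENNReal.ofReal_natCast _).symm
        _ ≤ ENNReal.ofReal ((1+ε) * (m:ℝ)) := ENNReal.ofReal_le_ofReal hr
        _ = D * ENNReal.ofReal (m:ℝ) := by rw [hDdef, ENNReal.ofReal_mul (by linarith)]
        _ = D * (m:ℝ≥0∞) := by rw [ENNReal.ofReal_natCast]
    have hS : S ≤ D * (G^2 * B) := by
      have hm0' : (m:ℝ≥0∞) ≠ 0 := Nat.cast_ne_zero.mpr (Nat.succ_ne_zero _)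
      have hmt : (m:ℝ≥0∞) ≠ ∞ := ENNReal.natCast_ne_top m
      refine (ENNReal.mul_le_mul_iff_right hm0' hmt).mp ?_
      calc (m:ℝ≥0∞) * S ≤ G^2 * ((((k+m:ℕ)):ℝ≥0∞) * B) := hmS
        _ ≤ G^2 * ((D * (m:ℝ≥0∞)) * B) := by gcongr
        _ = (m:ℝ≥0∞) * (D * (G^2 * B)) := by ring
    have hA1 : A ≤ D * S + C * ENNReal.ofReal T := by
      have hDS : D * S = ∫⁻ s in Set.Ioc 0 T, (φ s - C) := by
        rw [hSdef, hψdef]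
        rw [lintegral_const_mul' _ _ (ENNReal.inv_ne_top.mpr hD0)]
        rw [← mul_assoc, ENNReal.mul_inv_cancel hD0 hDt, one_mul]
      calc A = ∫⁻ s in Set.Ioc 0 T, φ s := hφeq
        _ ≤ ∫⁻ s in Set.Ioc 0 T, ((φ s - C) + C) := lintegral_mono fun s => le_tsub_add
        _ = (∫⁻ s in Set.Ioc 0 T, (φ s - C)) + C * volume (Set.Ioc 0 T) := by
            rw [lintegral_add_right _ measurable_const, setLIntegral_const]
        _ = D * S + C * ENNReal.ofReal T := by rw [hDS, Real.volume_Ioc, sub_zero]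
    calc A ≤ D * S + C * ENNReal.ofReal T := hA1
      _ ≤ D * (D * (G^2*B)) + C * ENNReal.ofReal T := by gcongr
      _ = ENNReal.ofReal ((1+ε)^2) * (G^2*B) + C * ENNReal.ofReal T := by
          rw [← mul_assoc, hDdef, ← ENNReal.ofReal_mul (by linarith), ← sq]
  -- pass to real numbers
  have hRHSfin : ∀ ε : ℝ, 0 < ε →
      ENNReal.ofReal ((1+ε)^2) * (G^2*B) + ENNReal.ofReal (4*ε^2+4*ε) * ENNReal.ofReal T
        ≠ ∞ := by
    intro ε hε
    refine ENNReal.add_ne_top.mpr ⟨?_, ?_⟩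
    · exact ENNReal.mul_ne_top ENNReal.ofReal_ne_top
        (ENNReal.mul_ne_top (ENNReal.pow_ne_top ENNReal.ofReal_ne_top) hBfin)
    · exact ENNReal.mul_ne_top ENNReal.ofReal_ne_top ENNReal.ofReal_ne_top
  have hAfin : A ≠ ∞ := ne_top_of_le_ne_top (hRHSfin 1 one_pos) (keyE 1 one_pos)
  have keyR : ∀ ε : ℝ, 0 < ε →
      A.toReal ≤ (1+ε)^2 * (Γ^2 * B.toReal) + (4*ε^2+4*ε) * T := by
    intro ε hε
    have h1 := ENNReal.toReal_mono (hRHSfin ε hε) (keyE ε hε)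
    have h2 : (ENNReal.ofReal ((1+ε)^2) * (G^2*B)
        + ENNReal.ofReal (4*ε^2+4*ε) * ENNReal.ofReal T).toReal
        = (1+ε)^2 * (Γ^2 * B.toReal) + (4*ε^2+4*ε) * T := by
      rw [ENNReal.toReal_add
          (ENNReal.mul_ne_top ENNReal.ofReal_ne_top
            (ENNReal.mul_ne_top (ENNReal.pow_ne_top ENNReal.ofReal_ne_top) hBfin))
          (ENNReal.mul_ne_top ENNReal.ofReal_ne_top ENNReal.ofReal_ne_top)]
      simp only [ENNReal.toReal_mul, ENNReal.toReal_pow, hGdef,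
        ENNReal.toReal_ofReal hΓ0, ENNReal.toReal_ofReal hT.le,
        ENNReal.toReal_ofReal (show (0:ℝ) ≤ (1+ε)^2 by positivity),
        ENNReal.toReal_ofReal (show (0:ℝ) ≤ 4*ε^2+4*ε by nlinarith [sq_nonneg ε])]
    rw [h2] at h1
    exact h1
  have hab : A.toReal ≤ Γ^2 * B.toReal := by
    have hcont : Continuous fun ε : ℝ => (1+ε)^2 * (Γ^2 * B.toReal) + (4*ε^2+4*ε) * T :=
      ((((continuous_const.add continuous_id).pow 2).mul continuous_const).add
        (((continuous_const.mul (continuous_pow 2)).add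
          (continuous_const.mul continuous_id)).mul continuous_const))
    have htendsto : Filter.Tendsto
        (fun ε : ℝ => (1+ε)^2 * (Γ^2 * B.toReal) + (4*ε^2+4*ε) * T)
        (nhdsWithin 0 (Set.Ioi 0)) (nhds (Γ^2 * B.toReal)) := by
      have h0 := (hcont.tendsto 0).mono_left (nhdsWithin_le_nhds (s := Set.Ioi (0:ℝ)))
      convert h0 using 2
      norm_num
    exact ge_of_tendsto htendsto
      (Filter.eventually_of_mem self_mem_nhdsWithin fun ε hε => keyR ε hε)
  have hsqrt : Real.sqrt A.toReal ≤ Γ * Real.sqrt B.toReal := by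
    rw [show Γ * Real.sqrt B.toReal = Real.sqrt (Γ^2 * B.toReal) from by
      rw [Real.sqrt_mul (sq_nonneg Γ), Real.sqrt_sq hΓ0]]
    exact Real.sqrt_le_sqrt hab
  have hTs : (0:ℝ) < Real.sqrt T := Real.sqrt_pos.mpr hT
  unfold rmsNorm
  rw [eLpNorm_two_eq, eLpNorm_two_eq, ← hAdef, ← hBdef,
    ← ENNReal.toReal_rpow, ← ENNReal.toReal_rpow, ← Real.sqrt_eq_rpow, ← Real.sqrt_eq_rpow,
    ← mul_div_assoc]
  gcongr
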